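/- Under a gauge transformation, at every point (x,v) with |L|²(x,v) ≠ 0 and for all r, s, the tensor B transforms as B'^r_s = B^r_s + Σ_{m,q,k} L_m T^m_{sq} P^q_k (A^{rk} − A^{kr}). -/

import Mathlib

/- Coordinate formalization of extended tensor fields in v- and p-representation
   for a generalized Legendre transformation λ(x,v) = (x, L(x,v)). -/

noncomputable section

open scoped BigOperators

/-- A point of the (co)tangent bundle in a single chart: a pair (x, v) or (x, p). -/
abbrev Pt (n : ℕ) := (Fin n → ℝ) × (Fin n → ℝ)

/-- An indexed family of scalar functions (components of a (co)vector field). -/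
abbrev Fam (n : ℕ) := Fin n → Pt n → ℝ

/-- Components Γ^k_{ij} of an extended connection (or of a gauge tensor T^k_{ij}). -/
abbrev Conn (n : ℕ) := Fin n → Fin n → Fin n → Pt n → ℝ

variable {n : ℕ}

/-- Kronecker delta δ^i_j. -/
def kron (i j : Fin n) : ℝ := if i = j then 1 else 0

/-- Partial derivative ∂f/∂x^m (first slot). -/
def pdx (m : Fin n) (f : Pt n → ℝ) (q : Pt n) : ℝ :=
  fderiv ℝ f q (Pi.single m 1, 0)

/-- Partial derivative ∂f/∂v^m (resp. ∂f/∂p_m): second slot. -/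
def pdv (m : Fin n) (f : Pt n → ℝ) (q : Pt n) : ℝ :=
  fderiv ℝ f q (0, Pi.single m 1)

/-- The generalized Legendre transformation λ(x,v) = (x, L(x,v)). -/
def lam (L : Fam n) (q : Pt n) : Pt n := (q.1, fun i => L i q)

/-- The inverse map λ⁻¹(x,p) = (x, V(x,p)). -/
def lamInv (V : Fam n) (q : Pt n) : Pt n := (q.1, fun i => V i q)

/-- g_{rk} = ∂L_r/∂v^k. -/
def gdn (L : Fam n) (r k : Fin n) (q : Pt n) : ℝ := pdv k (L r) q

/-- L^i = Σ_q L_q g^{qi}. -/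
def Lup (L : Fam n) (ginv : Fin n → Fin n → Pt n → ℝ) (i : Fin n) (q : Pt n) : ℝ :=
  ∑ j, L j q * ginv j i q

/-- |L|² = Σ_s L_s L^s. -/
def L2 (L : Fam n) (ginv : Fin n → Fin n → Pt n → ℝ) (q : Pt n) : ℝ :=
  ∑ s, L s q * Lup L ginv s q

/-- p-representation: W^i = Σ_s p_s ∂V^s/∂p_i. -/
def Wp (V : Fam n) (i : Fin n) (q : Pt n) : ℝ :=
  ∑ s, q.2 s * pdv i (V s) q

/-- p-representation: Ω = Σ_s p_s W^s. -/
def Omga (V : Fam n) (q : Pt n) : ℝ := ∑ s, q.2 s * Wp V s q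

/-- p-representation projector P̌^i_j = δ^i_j − W^i p_j / Ω. -/
def Pp (V : Fam n) (i j : Fin n) (q : Pt n) : ℝ :=
  kron i j - Wp V i q * q.2 j / Omga V q

/-- v-representation projector P^i_j = δ^i_j − L^i L_j / |L|². -/
def Pv (L : Fam n) (ginv : Fin n → Fin n → Pt n → ℝ) (i j : Fin n) (q : Pt n) : ℝ :=
  kron i j - Lup L ginv i q * L j q / L2 L ginv q

/-- Scalar part of the v-representation horizontal covariant derivative:
    ∂f/∂x^m − Σ_{a,b} v^a Γ^b_{am} ∂f/∂v^b. -/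
def vS (Γ : Conn n) (m : Fin n) (f : Pt n → ℝ) (q : Pt n) : ℝ :=
  pdx m f q - ∑ a, ∑ b, q.2 a * Γ b a m q * pdv b f q

/-- v-representation ∇_m X_j of a covector field. -/
def vCov (Γ : Conn n) (m : Fin n) (X : Fam n) (j : Fin n) (q : Pt n) : ℝ :=
  vS Γ m (X j) q - ∑ b, Γ b m j q * X b q

/-- v-representation ∇_m X^i of a vector field. -/
def vVec (Γ : Conn n) (m : Fin n) (X : Fam n) (i : Fin n) (q : Pt n) : ℝ :=
  vS Γ m (X i) q + ∑ a, Γ i m a q * X a q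

/-- v-representation ∇_k Y_{m r} of a (0,2) tensor field. -/
def vCov2 (Γ : Conn n) (k : Fin n) (Y : Fin n → Fin n → Pt n → ℝ)
    (m r : Fin n) (q : Pt n) : ℝ :=
  vS Γ k (Y m r) q - (∑ b, Γ b k m q * Y b r q) - (∑ b, Γ b k r q * Y m b q)

/-- v-representation ∇_m T^k_{ij} of a (1,2) tensor field. -/
def vT12 (Γ : Conn n) (m : Fin n) (T : Conn n) (k i j : Fin n) (q : Pt n) : ℝ :=
  vS Γ m (T k i j) q + (∑ a, Γ k m a q * T a i j q)
    - (∑ b, Γ b m i q * T k b j q) - (∑ b, Γ b m j q * T k i b q)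

/-- Connection components in p-representation: Γ^k_{ij} ∘ λ⁻¹. -/
def Gp (Γ : Conn n) (V : Fam n) (k i j : Fin n) (q : Pt n) : ℝ :=
  Γ k i j (lamInv V q)

/-- Scalar part of the p-representation horizontal covariant derivative:
    ∂f/∂x^m + Σ_{a,b} p_a Γ^a_{mb} ∂f/∂p_b. -/
def pS (G : Conn n) (m : Fin n) (f : Pt n → ℝ) (q : Pt n) : ℝ :=
  pdx m f q + ∑ a, ∑ b, q.2 a * G a m b q * pdv b f q

/-- p-representation ∇_m X_j of a covector field. -/
def pCov (G : Conn n) (m : Fin n) (X : Fam n) (j : Fin n) (q : Pt n) : ℝ :=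
  pS G m (X j) q - ∑ b, G b m j q * X b q

/-- p-representation ∇_m X^i of a vector field. -/
def pVec (G : Conn n) (m : Fin n) (X : Fam n) (i : Fin n) (q : Pt n) : ℝ :=
  pS G m (X i) q + ∑ a, G i m a q * X a q

/-- Force vector F^i = Φ^i + Σ_{j,k} Γ^i_{jk} v^j v^k. -/
def Fvec (Γ : Conn n) (Φ : Fam n) (i : Fin n) (q : Pt n) : ℝ :=
  Φ i q + ∑ j, ∑ k, Γ i j k q * q.2 j * q.2 k

/-- Force covector F_q = Σ_i g_{qi} F^i. -/
def Fcov (L : Fam n) (Γ : Conn n) (Φ : Fam n) (i : Fin n) (q : Pt n) : ℝ :=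
  ∑ j, gdn L i j q * Fvec Γ Φ j q

/-- p-representation force covector Q_i = Θ_i − Σ_{j,k} Γ^k_{ij} V^j p_k. -/
def Qp (Θ : Fam n) (Γ : Conn n) (V : Fam n) (i : Fin n) (q : Pt n) : ℝ :=
  Θ i q - ∑ j, ∑ k, Gp Γ V k i j q * V j q * q.2 k

/-- p-representation covector Ǔ_i = Q_i + Σ_s (∇_i V^s) p_s. -/
def Ucheck (Θ : Fam n) (Γ : Conn n) (V : Fam n) (i : Fin n) (q : Pt n) : ℝ :=
  Qp Θ Γ V i q + ∑ s, pVec (Gp Γ V) i V s q * q.2 s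

/-- v-representation covector U_i = Σ_q v^q ∇_q L_i − Σ_q L^q ∇_i L_q + F_i. -/
def Uv (L : Fam n) (ginv : Fin n → Fin n → Pt n → ℝ) (Γ : Conn n) (Φ : Fam n)
    (i : Fin n) (q : Pt n) : ℝ :=
  (∑ j, q.2 j * vCov Γ j L i q) - (∑ j, Lup L ginv j q * vCov Γ i L j q) + Fcov L Γ Φ i q

/-- v-representation dynamic curvature tensor D^k_{rij} = −∂Γ^k_{ir}/∂v^j. -/
def Dv (Γ : Conn n) (k r i j : Fin n) (q : Pt n) : ℝ := -(pdv j (Γ k i r) q)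

/-- v-representation curvature tensor R^k_{rij}. -/
def Rv (Γ : Conn n) (k r i j : Fin n) (q : Pt n) : ℝ :=
  pdx i (Γ k j r) q - pdx j (Γ k i r) q
  + (∑ m, (Γ k i m q * Γ m j r q - Γ k j m q * Γ m i r q))
  - (∑ m, ∑ s, q.2 s * Γ m i s q * pdv m (Γ k j r) q)
  + (∑ m, ∑ s, q.2 s * Γ m j s q * pdv m (Γ k i r) q)

/-- p-representation dynamic curvature tensor Ď^{kr}_{ij} = −∂Γ^k_{ij}/∂p_r. -/
def Dp (G : Conn n) (k r i j : Fin n) (q : Pt n) : ℝ := -(pdv r (G k i j) q)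

/-- p-representation curvature tensor Ř^k_{rij}. -/
def Rp (G : Conn n) (k r i j : Fin n) (q : Pt n) : ℝ :=
  pdx i (G k j r) q - pdx j (G k i r) q
  + (∑ m, (G k i m q * G m j r q - G k j m q * G m i r q))
  + (∑ m, ∑ s, q.2 s * G s m i q * pdv m (G k j r) q)
  - (∑ m, ∑ s, q.2 s * G s m j q * pdv m (G k i r) q)

/-- p-representation vector field α̌^k. -/
def alphaCheck (Θ : Fam n) (Γ : Conn n) (V : Fam n) (k : Fin n) (q : Pt n) : ℝ :=
  (∑ r, pdv k (V r) q * Ucheck Θ Γ V r q)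
  + (∑ r, pVec (Gp Γ V) r (Wp V) k q * V r q)
  + (∑ r, pdv r (Wp V k) q * Qp Θ Γ V r q)
  + (∑ r, Wp V r q * pdv k (Qp Θ Γ V r) q)
  - (∑ r, ∑ s, ∑ j, q.2 s * Dp (Gp Γ V) s k r j q * Wp V r q * V j q)

/-- v-representation vector field α^k. -/
def alphaV (L : Fam n) (ginv : Fin n → Fin n → Pt n → ℝ) (Γ : Conn n) (Φ : Fam n)
    (k : Fin n) (q : Pt n) : ℝ :=
  (∑ r, ginv r k q * Uv L ginv Γ Φ r q)
  + (∑ r, q.2 r * vVec Γ r (Lup L ginv) k q)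
  + (∑ j, Fvec Γ Φ j q * pdv j (Lup L ginv k) q)
  + (∑ j, ∑ r, ∑ s, Lup L ginv r q * ginv j k q * q.2 s * pdv j (vCov Γ s L r) q)
  + (∑ j, ∑ r, Lup L ginv r q * ginv j k q * pdv j (Fcov L Γ Φ r) q)
  + (∑ j, ∑ r, Lup L ginv r q * ginv j k q * vCov Γ j L r q)
  - (∑ j, ∑ m, ∑ r, ∑ s, ginv m k q * L s q * Dv Γ s r j m q * Lup L ginv r q * q.2 j)

/-- p-representation covector field β̌_k. -/
def betaCheck (Θ : Fam n) (Γ : Conn n) (V : Fam n) (k : Fin n) (q : Pt n) : ℝ :=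
  (∑ r, pCov (Gp Γ V) r (Ucheck Θ Γ V) k q * V r q)
  + (∑ r, pdv r (Ucheck Θ Γ V k) q * Qp Θ Γ V r q)
  + (∑ r, pVec (Gp Γ V) k V r q * Ucheck Θ Γ V r q)
  + (∑ r, pCov (Gp Γ V) k (Qp Θ Γ V) r q * Wp V r q)
  - (∑ r, ∑ s, ∑ m, (Rp (Gp Γ V) s r m k q * V m q
      - Dp (Gp Γ V) s m r k q * Qp Θ Γ V m q) * Wp V r q * q.2 s)

/-- v-representation covector field β_k. -/
def betaV (L : Fam n) (ginv : Fin n → Fin n → Pt n → ℝ) (Γ : Conn n) (Φ : Fam n)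
    (k : Fin n) (q : Pt n) : ℝ :=
  (∑ r, q.2 r * vCov Γ r (Uv L ginv Γ Φ) k q)
  + (∑ j, Fvec Γ Φ j q * pdv j (Uv L ginv Γ Φ k) q)
  - (∑ j, ∑ r, ∑ s, vCov Γ k L j q * ginv r j q * q.2 s * vCov Γ s L r q)
  - (∑ j, ∑ r, vCov Γ k L j q * ginv r j q * Fcov L Γ Φ r q)
  + (∑ r, Lup L ginv r q * vCov Γ k (Fcov L Γ Φ) r q)
  + (∑ m, ∑ r, Lup L ginv r q * q.2 m * vCov2 Γ k (fun m' r' => vCov Γ m' L r') m r q)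
  - (∑ j, ∑ r, ∑ s, Lup L ginv r q * vCov Γ k L j q * ginv s j q * pdv s (Fcov L Γ Φ r) q)
  - (∑ j, ∑ m, ∑ r, ∑ s, Lup L ginv r q * vCov Γ k L j q * ginv s j q * q.2 m
      * pdv s (vCov Γ m L r) q)
  - (∑ r, ∑ s, ∑ m, Rv Γ s r m k q * q.2 m * Lup L ginv r q * L s q)
  + (∑ j, ∑ r, ∑ s, ∑ m, ∑ a, ginv a j q * vCov Γ k L j q * Dv Γ s m r a q * q.2 m
      * Lup L ginv r q * L s q)
  + (∑ r, ∑ s, ∑ m, ∑ a, ginv a m q * Dv Γ s r k a q * Fcov L Γ Φ m q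
      * Lup L ginv r q * L s q)

/-- v-representation covector field η_k = β_k − Σ_s U_k α^s L_s / |L|². -/
def etaV (L : Fam n) (ginv : Fin n → Fin n → Pt n → ℝ) (Γ : Conn n) (Φ : Fam n)
    (k : Fin n) (q : Pt n) : ℝ :=
  betaV L ginv Γ Φ k q
    - ∑ s, Uv L ginv Γ Φ k q * alphaV L ginv Γ Φ s q * L s q / L2 L ginv q

/-- p-representation tensor Ǎ^{rs} = ∂W^s/∂p_r. -/
def Acheck (V : Fam n) (r s : Fin n) (q : Pt n) : ℝ := pdv r (Wp V s) q

/-- v-representation tensor A^{rs} = Σ_q g^{qr} ∂L^s/∂v^q. -/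
def Av (L : Fam n) (ginv : Fin n → Fin n → Pt n → ℝ) (r s : Fin n) (q : Pt n) : ℝ :=
  ∑ j, ginv j r q * pdv j (Lup L ginv s) q

/-- p-representation tensor B̌^r_s. -/
def Bcheck (Θ : Fam n) (Γ : Conn n) (V : Fam n) (r s : Fin n) (q : Pt n) : ℝ :=
  pdv r (Ucheck Θ Γ V s) q
  + (∑ m, ∑ k, Wp V k q * q.2 m * Dp (Gp Γ V) m r k s q)
  - pVec (Gp Γ V) s (Wp V) r q
  + (∑ m, (pdv m (Wp V r) q - pdv r (Wp V m) q) * Ucheck Θ Γ V s q * q.2 m / Omga V q)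

/-- v-representation tensor B^r_s. -/
def Bv (L : Fam n) (ginv : Fin n → Fin n → Pt n → ℝ) (Γ : Conn n) (Φ : Fam n)
    (r s : Fin n) (q : Pt n) : ℝ :=
  (∑ j, ginv j r q * pdv j (Uv L ginv Γ Φ s) q)
  + (∑ m, ∑ k, ∑ j, ginv j r q * Lup L ginv k q * L m q * Dv Γ m k s j q)
  - vVec Γ s (Lup L ginv) r q
  + (∑ j, ∑ k, vCov Γ s L k q * ginv j k q * pdv j (Lup L ginv r) q)
  + (∑ j, ∑ m, (ginv j m q * pdv j (Lup L ginv r) q - ginv j r q * pdv j (Lup L ginv m) q)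
      * Uv L ginv Γ Φ s q * L m q / L2 L ginv q)

/-- p-representation tensor Č_{rs}. -/
def Ccheck (Θ : Fam n) (Γ : Conn n) (V : Fam n) (r s : Fin n) (q : Pt n) : ℝ :=
  pCov (Gp Γ V) r (Ucheck Θ Γ V) s q
  - (∑ m, (Ucheck Θ Γ V r q * pdv m (Ucheck Θ Γ V s) q
      + Ucheck Θ Γ V s q * pVec (Gp Γ V) r (Wp V) m q) * q.2 m / Omga V q)
  - (∑ k, ∑ j, ((∑ m, Dp (Gp Γ V) m j k s q * Ucheck Θ Γ V r q * q.2 m / Omga V q)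
      + Rp (Gp Γ V) j k r s q / 2) * Wp V k q * q.2 j)

/-- v-representation tensor C_{rs}. -/
def Cv (L : Fam n) (ginv : Fin n → Fin n → Pt n → ℝ) (Γ : Conn n) (Φ : Fam n)
    (r s : Fin n) (q : Pt n) : ℝ :=
  vCov Γ r (Uv L ginv Γ Φ) s q
  - (∑ j, ∑ k, vCov Γ r L j q * ginv k j q * pdv k (Uv L ginv Γ Φ s) q)
  - (∑ m, Uv L ginv Γ Φ s q * vVec Γ r (Lup L ginv) m q * L m q / L2 L ginv q)
  - (∑ j, ∑ m, Uv L ginv Γ Φ r q * ginv j m q * pdv j (Uv L ginv Γ Φ s) q * L m q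
      / L2 L ginv q)
  + (∑ m, ∑ j, ∑ k, Uv L ginv Γ Φ s q * vCov Γ r L k q * ginv j k q
      * pdv j (Lup L ginv m) q * L m q / L2 L ginv q)
  - (∑ k, ∑ j, ∑ m, ∑ a, ginv a j q * Dv Γ m k s a q * Uv L ginv Γ Φ r q * L m q
      * Lup L ginv k q * L j q / L2 L ginv q)
  - (∑ k, ∑ j, (Rv Γ j k r s q / 2) * Lup L ginv k q * L j q)
  - (∑ k, ∑ j, ∑ m, ∑ a, vCov Γ r L m q * Dv Γ j k s a q * ginv a m q
      * Lup L ginv k q * L j q)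

/-- Gauge-transformed connection Γ' = Γ + T. -/
def addT (Γ T : Conn n) : Conn n := fun k i j q => Γ k i j q + T k i j q

/-- The quantity Ξ_{rs} appearing in the gauge transformation rule for C. -/
def XiG (L : Fam n) (ginv : Fin n → Fin n → Pt n → ℝ) (Γ : Conn n) (Φ : Fam n)
    (T : Conn n) (r s : Fin n) (q : Pt n) : ℝ :=
  (∑ j, ∑ b, ∑ m, T b r j q * L b q * Pv L ginv j m q * Bv L ginv Γ Φ m s q)
  + (∑ j, ∑ b, ∑ m, ∑ a, ∑ c, ∑ e, T b r j q * L b q * Pv L ginv j m q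
      * Av L ginv m a q * Pv L ginv c a q * T e s c q * L e q)

end

section GaugeHelpers
open Finset
variable {n : ℕ}

lemma dAt {f : Pt n → ℝ} (hf : ContDiff ℝ (⊤ : ℕ∞) f) (q : Pt n) :
    DifferentiableAt ℝ f q := (hf.differentiable (by simp)).differentiableAt

lemma contDiff_pdv {f : Pt n → ℝ} (hf : ContDiff ℝ (⊤ : ℕ∞) f) (m : Fin n) :
    ContDiff ℝ (⊤ : ℕ∞) (pdv m f) :=
  (hf.fderiv_right (by exact_mod_cast le_top)).clm_apply contDiff_const

lemma contDiff_pdx {f : Pt n → ℝ} (hf : ContDiff ℝ (⊤ : ℕ∞) f) (m : Fin n) :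
    ContDiff ℝ (⊤ : ℕ∞) (pdx m f) :=
  (hf.fderiv_right (by exact_mod_cast le_top)).clm_apply contDiff_const

lemma contDiff_v (a : Fin n) : ContDiff ℝ (⊤ : ℕ∞) (fun q : Pt n => q.2 a) :=
  ((ContinuousLinearMap.proj (R := ℝ) (φ := fun _ : Fin n => ℝ) a).contDiff).comp contDiff_snd

lemma pdv_add {f g : Pt n → ℝ} {q : Pt n} (m : Fin n)
    (hf : DifferentiableAt ℝ f q) (hg : DifferentiableAt ℝ g q) :
    pdv m (fun x => f x + g x) q = pdv m f q + pdv m g q := by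
  unfold pdv; rw [fderiv_fun_add hf hg]; simp

lemma pdv_sum {ι : Type*} (s : Finset ι) {f : ι → Pt n → ℝ} {q : Pt n} (m : Fin n)
    (hf : ∀ i ∈ s, DifferentiableAt ℝ (f i) q) :
    pdv m (fun x => ∑ i ∈ s, f i x) q = ∑ i ∈ s, pdv m (f i) q := by
  unfold pdv; rw [fderiv_fun_sum hf]; simp

lemma pdv_mul {f g : Pt n → ℝ} {q : Pt n} (m : Fin n)
    (hf : DifferentiableAt ℝ f q) (hg : DifferentiableAt ℝ g q) :
    pdv m (fun x => f x * g x) q = pdv m f q * g q + f q * pdv m g q := by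
  unfold pdv; rw [fderiv_fun_mul hf hg]; simp; ring

lemma pdv_mul3 {f g h : Pt n → ℝ} {q : Pt n} (m : Fin n)
    (hf : DifferentiableAt ℝ f q) (hg : DifferentiableAt ℝ g q)
    (hh : DifferentiableAt ℝ h q) :
    pdv m (fun x => f x * g x * h x) q
      = pdv m f q * g q * h q + f q * pdv m g q * h q + f q * g q * pdv m h q := by
  rw [pdv_mul (f := fun x => f x * g x) m (hf.mul hg) hh, pdv_mul m hf hg]; ring

/- sum shuffling -/
lemma sum3_rotR (G : Fin n → Fin n → Fin n → ℝ) :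
    (∑ i, ∑ j, ∑ k, G i j k) = ∑ k, ∑ i, ∑ j, G i j k := by
  have h : ∀ i : Fin n, (∑ j, ∑ k, G i j k) = ∑ k, ∑ j, G i j k := fun i => Finset.sum_comm
  simp only [h]
  exact Finset.sum_comm

lemma sum3_rotL (G : Fin n → Fin n → Fin n → ℝ) :
    (∑ i, ∑ j, ∑ k, G i j k) = ∑ j, ∑ k, ∑ i, G i j k := by
  rw [Finset.sum_comm]
  exact Finset.sum_congr rfl fun j _ => Finset.sum_comm

lemma sum3_swap13 (G : Fin n → Fin n → Fin n → ℝ) :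
    (∑ i, ∑ j, ∑ k, G i j k) = ∑ k, ∑ j, ∑ i, G i j k :=
  (sum3_rotL G).trans Finset.sum_comm

lemma sum4_swap (F : Fin n → Fin n → Fin n → Fin n → ℝ) :
    (∑ i, ∑ j, ∑ k, ∑ l, F i j k l) = ∑ k, ∑ l, ∑ i, ∑ j, F i j k l := by
  have h1 : ∀ i : Fin n, (∑ j, ∑ k, ∑ l, F i j k l) = ∑ k, ∑ j, ∑ l, F i j k l :=
    fun i => Finset.sum_comm
  simp only [h1]
  rw [Finset.sum_comm]
  exact Finset.sum_congr rfl fun k _ => sum3_rotR _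

lemma sum_kron_left (j : Fin n) (f : Fin n → ℝ) : (∑ k, kron j k * f k) = f j := by
  simp [kron, ite_mul]

lemma sum_mul_kron (b : Fin n) (f : Fin n → ℝ) : (∑ j, f j * kron j b) = f b := by
  simp [kron, mul_ite]

end GaugeHelpers
section GaugeHelpers2
open Finset
variable {n : ℕ} {L : Fam n} {ginv : Fin n → Fin n → Pt n → ℝ} {Γ : Conn n}
  {Φ : Fam n} {T : Conn n}

lemma contDiff_Lup (hL : ∀ i, ContDiff ℝ (⊤ : ℕ∞) (L i))
    (hg : ∀ i j, ContDiff ℝ (⊤ : ℕ∞) (ginv i j)) (i : Fin n) :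
    ContDiff ℝ (⊤ : ℕ∞) (Lup L ginv i) := by
  unfold Lup
  exact ContDiff.sum fun j _ => (hL j).mul (hg j i)

lemma contDiff_vS (hΓ : ∀ k i j, ContDiff ℝ (⊤ : ℕ∞) (Γ k i j)) {f : Pt n → ℝ}
    (hf : ContDiff ℝ (⊤ : ℕ∞) f) (m : Fin n) : ContDiff ℝ (⊤ : ℕ∞) (vS Γ m f) := by
  unfold vS
  exact (contDiff_pdx hf m).sub <| ContDiff.sum fun a _ => ContDiff.sum fun b _ =>
    ((contDiff_v a).mul (hΓ b a m)).mul (contDiff_pdv hf b)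

lemma contDiff_vCov (hΓ : ∀ k i j, ContDiff ℝ (⊤ : ℕ∞) (Γ k i j)) {X : Fam n}
    (hX : ∀ i, ContDiff ℝ (⊤ : ℕ∞) (X i)) (m j : Fin n) :
    ContDiff ℝ (⊤ : ℕ∞) (fun q => vCov Γ m X j q) := by
  unfold vCov
  exact (contDiff_vS hΓ (hX j) m).sub <| ContDiff.sum fun b _ => (hΓ b m j).mul (hX b)

lemma contDiff_Fvec (hΓ : ∀ k i j, ContDiff ℝ (⊤ : ℕ∞) (Γ k i j))
    (hΦ : ∀ i, ContDiff ℝ (⊤ : ℕ∞) (Φ i)) (i : Fin n) :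
    ContDiff ℝ (⊤ : ℕ∞) (Fvec Γ Φ i) := by
  unfold Fvec
  exact (hΦ i).add <| ContDiff.sum fun j _ => ContDiff.sum fun k _ =>
    ((hΓ i j k).mul (contDiff_v j)).mul (contDiff_v k)

lemma contDiff_Fcov (hL : ∀ i, ContDiff ℝ (⊤ : ℕ∞) (L i))
    (hΓ : ∀ k i j, ContDiff ℝ (⊤ : ℕ∞) (Γ k i j))
    (hΦ : ∀ i, ContDiff ℝ (⊤ : ℕ∞) (Φ i)) (i : Fin n) :
    ContDiff ℝ (⊤ : ℕ∞) (Fcov L Γ Φ i) := by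
  unfold Fcov gdn
  exact ContDiff.sum fun j _ => (contDiff_pdv (hL i) j).mul (contDiff_Fvec hΓ hΦ j)

lemma contDiff_Uv (hL : ∀ i, ContDiff ℝ (⊤ : ℕ∞) (L i))
    (hg : ∀ i j, ContDiff ℝ (⊤ : ℕ∞) (ginv i j))
    (hΓ : ∀ k i j, ContDiff ℝ (⊤ : ℕ∞) (Γ k i j))
    (hΦ : ∀ i, ContDiff ℝ (⊤ : ℕ∞) (Φ i)) (i : Fin n) :
    ContDiff ℝ (⊤ : ℕ∞) (Uv L ginv Γ Φ i) := by
  unfold Uv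
  exact ((ContDiff.sum fun j _ => (contDiff_v j).mul (contDiff_vCov hΓ hL j i)).sub
    (ContDiff.sum fun j _ => (contDiff_Lup hL hg j).mul (contDiff_vCov hΓ hL i j))).add
    (contDiff_Fcov hL hΓ hΦ i)

/-- The other-side inverse identity. -/
lemma gdn_ginv (hginv : ∀ (q : Pt n) (s k : Fin n),
      (∑ r, ginv s r q * gdn L r k q) = kron s k)
    (q : Pt n) (b r : Fin n) : (∑ j, gdn L b j q * ginv j r q) = kron b r := by
  classical
  let A : Matrix (Fin n) (Fin n) ℝ := Matrix.of fun i j => ginv i j q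
  let B : Matrix (Fin n) (Fin n) ℝ := Matrix.of fun i j => gdn L i j q
  have hAB : A * B = 1 := by
    ext i j
    simp only [Matrix.mul_apply, Matrix.one_apply, A, B, Matrix.of_apply]
    rw [hginv q i j]; simp [kron]
  have hBA : B * A = 1 := mul_eq_one_comm.mp hAB
  have h2 := congrFun (congrFun hBA b) r
  simp only [Matrix.mul_apply, Matrix.one_apply, A, B, Matrix.of_apply] at h2
  rw [h2]; simp [kron]

/-- Contraction Σ_j L^j g_{jb} = L_b. -/
lemma lup_gdn (hginv : ∀ (q : Pt n) (s k : Fin n),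
      (∑ r, ginv s r q * gdn L r k q) = kron s k)
    (q : Pt n) (b : Fin n) : (∑ j, Lup L ginv j q * gdn L j b q) = L b q := by
  simp only [Lup, Finset.sum_mul]
  rw [Finset.sum_comm]
  have h : ∀ p : Fin n, (∑ j, L p q * ginv p j q * gdn L j b q) = L p q * kron p b := by
    intro p
    rw [← hginv q p b, Finset.mul_sum]
    exact Finset.sum_congr rfl fun j _ => by ring
  calc (∑ p, ∑ j, L p q * ginv p j q * gdn L j b q)
      = ∑ p, L p q * kron p b := Finset.sum_congr rfl fun p _ => h p
    _ = L b q := sum_mul_kron b _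

lemma vCov_gauge (Γ T : Conn n) (X : Fam n) (m j : Fin n) (q : Pt n) :
    vCov (addT Γ T) m X j q
      = vCov Γ m X j q - (∑ a, ∑ b, q.2 a * T b a m q * pdv b (X j) q)
        - ∑ b, T b m j q * X b q := by
  simp only [vCov, vS, addT, add_mul, mul_add, Finset.sum_add_distrib]
  ring

lemma vVec_gauge (Γ T : Conn n) (X : Fam n) (s r : Fin n) (q : Pt n) :
    vVec (addT Γ T) s X r q
      = vVec Γ s X r q - (∑ a, ∑ b, q.2 a * T b a s q * pdv b (X r) q)
        + ∑ a, T r s a q * X a q := by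
  simp only [vVec, vS, addT, add_mul, mul_add, Finset.sum_add_distrib]
  ring

lemma Fvec_gauge (Γ T : Conn n) (Φ : Fam n) (i : Fin n) (q : Pt n) :
    Fvec (addT Γ T) Φ i q
      = Fvec Γ Φ i q + ∑ j, ∑ k, T i j k q * q.2 j * q.2 k := by
  simp only [Fvec, addT, add_mul, Finset.sum_add_distrib]
  ring

lemma Fcov_gauge (L : Fam n) (Γ T : Conn n) (Φ : Fam n) (i : Fin n) (q : Pt n) :
    Fcov L (addT Γ T) Φ i q
      = Fcov L Γ Φ i q + ∑ j, ∑ k, ∑ l, gdn L i j q * T j k l q * q.2 k * q.2 l := by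
  unfold Fcov
  simp only [Fvec_gauge, mul_add, Finset.sum_add_distrib, Finset.mul_sum]
  congr 1
  exact Finset.sum_congr rfl fun j _ => Finset.sum_congr rfl fun k _ =>
    Finset.sum_congr rfl fun l _ => by ring

lemma Dv_gauge (hΓ : ∀ k i j, ContDiff ℝ (⊤ : ℕ∞) (Γ k i j))
    (hT : ∀ k i j, ContDiff ℝ (⊤ : ℕ∞) (T k i j)) (m k s j : Fin n) (q : Pt n) :
    Dv (addT Γ T) m k s j q = Dv Γ m k s j q - pdv j (T m s k) q := by
  unfold Dv addT
  rw [pdv_add j (dAt (hΓ m s k) q) (dAt (hT m s k) q)]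
  ring

end GaugeHelpers2
section GaugeHelpers3
open Finset
variable {n : ℕ} {L : Fam n} {ginv : Fin n → Fin n → Pt n → ℝ} {Γ : Conn n}
  {Φ : Fam n} {T : Conn n}

lemma Uv_gauge
    (hginv : ∀ (q : Pt n) (s k : Fin n), (∑ r, ginv s r q * gdn L r k q) = kron s k)
    (s : Fin n) (q : Pt n) :
    Uv L ginv (addT Γ T) Φ s q
      = Uv L ginv Γ Φ s q + ∑ k, ∑ b, Lup L ginv k q * L b q * T b s k q := by
  have h1 : (∑ j, q.2 j * vCov (addT Γ T) j L s q)
      = (∑ j, q.2 j * vCov Γ j L s q)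
        - (∑ j, q.2 j * ∑ a, ∑ b, q.2 a * T b a j q * pdv b (L s) q)
        - (∑ j, q.2 j * ∑ b, T b j s q * L b q) := by
    simp only [vCov_gauge, mul_sub]
    rw [Finset.sum_sub_distrib, Finset.sum_sub_distrib]
  have h2 : (∑ j, Lup L ginv j q * vCov (addT Γ T) s L j q)
      = (∑ j, Lup L ginv j q * vCov Γ s L j q)
        - (∑ j, Lup L ginv j q * ∑ a, ∑ b, q.2 a * T b a s q * pdv b (L j) q)
        - (∑ j, Lup L ginv j q * ∑ b, T b s j q * L b q) := by
    simp only [vCov_gauge, mul_sub]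
    rw [Finset.sum_sub_distrib, Finset.sum_sub_distrib]
  have hA1 : (∑ j, q.2 j * ∑ a, ∑ b, q.2 a * T b a j q * pdv b (L s) q)
      = ∑ j, ∑ k, ∑ l, gdn L s j q * T j k l q * q.2 k * q.2 l := by
    simp only [Finset.mul_sum, gdn]
    rw [sum3_swap13 (fun j a b => q.2 j * (q.2 a * T b a j q * pdv b (L s) q))]
    exact Finset.sum_congr rfl fun b _ => Finset.sum_congr rfl fun a _ =>
      Finset.sum_congr rfl fun j _ => by ring
  have hA2 : (∑ j, q.2 j * ∑ b, T b j s q * L b q)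
      = ∑ j, Lup L ginv j q * ∑ a, ∑ b, q.2 a * T b a s q * pdv b (L j) q := by
    simp only [Finset.mul_sum]
    rw [sum3_rotL (fun j a b => Lup L ginv j q * (q.2 a * T b a s q * pdv b (L j) q))]
    refine Finset.sum_congr rfl fun a _ => Finset.sum_congr rfl fun b _ => ?_
    have hc : (∑ j, Lup L ginv j q * (q.2 a * T b a s q * pdv b (L j) q))
        = q.2 a * T b a s q * ∑ j, Lup L ginv j q * gdn L j b q := by
      rw [Finset.mul_sum]
      exact Finset.sum_congr rfl fun j _ => by simp only [gdn]; ring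
    rw [hc, lup_gdn hginv q b]
    ring
  have hB2 : (∑ j, Lup L ginv j q * ∑ b, T b s j q * L b q)
      = ∑ k, ∑ b, Lup L ginv k q * L b q * T b s k q := by
    simp only [Finset.mul_sum]
    exact Finset.sum_congr rfl fun k _ => Finset.sum_congr rfl fun b _ => by ring
  unfold Uv
  rw [h1, h2, Fcov_gauge]
  linear_combination -hA1 - hA2 + hB2

end GaugeHelpers3
set_option maxHeartbeats 2000000 in
theorem stmt13
    (n : ℕ) (hn : 2 ≤ n)
    (L V : Fam n) (ginv : Fin n → Fin n → Pt n → ℝ)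
    (hL : ∀ i, ContDiff ℝ (⊤ : ℕ∞) (L i))
    (hV : ∀ i, ContDiff ℝ (⊤ : ℕ∞) (V i))
    (hginvSm : ∀ i j, ContDiff ℝ (⊤ : ℕ∞) (ginv i j))
    (hLeft : ∀ q : Pt n, lamInv V (lam L q) = q)
    (hRight : ∀ q : Pt n, lam L (lamInv V q) = q)
    (hginv : ∀ (q : Pt n) (s k : Fin n), (∑ r, ginv s r q * gdn L r k q) = kron s k)
    (Γ : Conn n)
    (hΓ : ∀ k i j, ContDiff ℝ (⊤ : ℕ∞) (Γ k i j))
    (hΓsym : ∀ (k i j : Fin n) (q : Pt n), Γ k i j q = Γ k j i q)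
    (Φ : Fam n) (hΦ : ∀ i, ContDiff ℝ (⊤ : ℕ∞) (Φ i))
    (T : Conn n)
    (hT : ∀ k i j, ContDiff ℝ (⊤ : ℕ∞) (T k i j))
    (hTsym : ∀ (k i j : Fin n) (q : Pt n), T k i j q = T k j i q) :
    ∀ q : Pt n, L2 L ginv q ≠ 0 → ∀ r s : Fin n,
      Bv L ginv (addT Γ T) Φ r s q
        = Bv L ginv Γ Φ r s q
          + ∑ m, ∑ j, ∑ k, L m q * T m s j q * Pv L ginv j k q
              * (Av L ginv r k q - Av L ginv k r q) := by
  intro q hq r s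
  classical
  -- decomposition of the transformed U and its v-derivatives
  have hfun : Uv L ginv (addT Γ T) Φ s
      = fun x => Uv L ginv Γ Φ s x + ∑ k, ∑ b, Lup L ginv k x * L b x * T b s k x :=
    funext fun x => Uv_gauge hginv s x
  have hDsm : ContDiff ℝ (⊤ : ℕ∞)
      (fun x : Pt n => ∑ k, ∑ b, Lup L ginv k x * L b x * T b s k x) :=
    ContDiff.sum fun k _ => ContDiff.sum fun b _ =>
      ((contDiff_Lup hL hginvSm k).mul (hL b)).mul (hT b s k)
  have hdU : ∀ j, pdv j (Uv L ginv (addT Γ T) Φ s) q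
      = pdv j (Uv L ginv Γ Φ s) q
        + pdv j (fun x => ∑ k, ∑ b, Lup L ginv k x * L b x * T b s k x) q := by
    intro j
    rw [hfun]
    exact pdv_add j (dAt (contDiff_Uv hL hginvSm hΓ hΦ s) q) (dAt hDsm q)
  have hdD : ∀ j, pdv j (fun x => ∑ k, ∑ b, Lup L ginv k x * L b x * T b s k x) q
      = ∑ k, ∑ b, (pdv j (Lup L ginv k) q * L b q * T b s k q
          + Lup L ginv k q * pdv j (L b) q * T b s k q
          + Lup L ginv k q * L b q * pdv j (T b s k) q) := by
    intro j
    rw [pdv_sum (Finset.univ)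
        (f := fun k x => ∑ b, Lup L ginv k x * L b x * T b s k x) j
        (fun k _ => dAt (ContDiff.sum fun b _ =>
          ((contDiff_Lup hL hginvSm k).mul (hL b)).mul (hT b s k)) q)]
    refine Finset.sum_congr rfl fun k _ => ?_
    rw [pdv_sum (Finset.univ)
        (f := fun b x => Lup L ginv k x * L b x * T b s k x) j
        (fun b _ => dAt (((contDiff_Lup hL hginvSm k).mul (hL b)).mul (hT b s k)) q)]
    refine Finset.sum_congr rfl fun b _ => ?_
    exact pdv_mul3 j (dAt (contDiff_Lup hL hginvSm k) q) (dAt (hL b) q) (dAt (hT b s k) q)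
  -- term 1
  have ht1 : (∑ j, ginv j r q * pdv j (Uv L ginv (addT Γ T) Φ s) q)
      = (∑ j, ginv j r q * pdv j (Uv L ginv Γ Φ s) q)
        + (∑ k, ∑ b, Av L ginv r k q * L b q * T b s k q)
        + (∑ k, Lup L ginv k q * T r s k q)
        + (∑ j, ∑ k, ∑ b, ginv j r q * (Lup L ginv k q * L b q * pdv j (T b s k) q)) := by
    have step1 : (∑ j, ginv j r q * pdv j (Uv L ginv (addT Γ T) Φ s) q)
        = ∑ j, (ginv j r q * pdv j (Uv L ginv Γ Φ s) q
            + ∑ k, ∑ b, (ginv j r q * (pdv j (Lup L ginv k) q * L b q * T b s k q)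
              + ginv j r q * (Lup L ginv k q * pdv j (L b) q * T b s k q)
              + ginv j r q * (Lup L ginv k q * L b q * pdv j (T b s k) q))) := by
      refine Finset.sum_congr rfl fun j _ => ?_
      rw [hdU j, hdD j, mul_add, Finset.mul_sum]
      congr 1
      refine Finset.sum_congr rfl fun k _ => ?_
      rw [Finset.mul_sum]
      refine Finset.sum_congr rfl fun b _ => ?_
      ring
    have step2 : (∑ j, ∑ k, ∑ b, ginv j r q * (pdv j (Lup L ginv k) q * L b q * T b s k q))
        = ∑ k, ∑ b, Av L ginv r k q * L b q * T b s k q := by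
      rw [sum3_rotL (fun j k b => ginv j r q * (pdv j (Lup L ginv k) q * L b q * T b s k q))]
      refine Finset.sum_congr rfl fun k _ => Finset.sum_congr rfl fun b _ => ?_
      simp only [Av]
      rw [Finset.sum_mul, Finset.sum_mul]
      exact Finset.sum_congr rfl fun j _ => by ring
    have step3 : (∑ j, ∑ k, ∑ b, ginv j r q * (Lup L ginv k q * pdv j (L b) q * T b s k q))
        = ∑ k, Lup L ginv k q * T r s k q := by
      rw [sum3_rotL (fun j k b => ginv j r q * (Lup L ginv k q * pdv j (L b) q * T b s k q))]
      refine Finset.sum_congr rfl fun k _ => ?_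
      have hb : ∀ b : Fin n, (∑ j, ginv j r q * (Lup L ginv k q * pdv j (L b) q * T b s k q))
          = (Lup L ginv k q * T b s k q) * kron b r := by
        intro b
        rw [← gdn_ginv hginv q b r, Finset.mul_sum]
        exact Finset.sum_congr rfl fun j _ => by simp only [gdn]; ring
      calc (∑ b, ∑ j, ginv j r q * (Lup L ginv k q * pdv j (L b) q * T b s k q))
          = ∑ b, (Lup L ginv k q * T b s k q) * kron b r :=
            Finset.sum_congr rfl fun b _ => hb b
        _ = Lup L ginv k q * T r s k q := sum_mul_kron r _
    rw [step1]
    simp only [Finset.sum_add_distrib]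
    rw [step2, step3]
    ring
  -- term 2
  have ht2 : (∑ m, ∑ k, ∑ j, ginv j r q * Lup L ginv k q * L m q * Dv (addT Γ T) m k s j q)
      = (∑ m, ∑ k, ∑ j, ginv j r q * Lup L ginv k q * L m q * Dv Γ m k s j q)
        - (∑ j, ∑ k, ∑ b, ginv j r q * (Lup L ginv k q * L b q * pdv j (T b s k) q)) := by
    simp only [Dv_gauge hΓ hT, mul_sub, Finset.sum_sub_distrib]
    congr 1
    rw [sum3_swap13 (fun m k j => ginv j r q * Lup L ginv k q * L m q * pdv j (T m s k) q)]
    refine Finset.sum_congr rfl fun j _ => Finset.sum_congr rfl fun k _ =>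
      Finset.sum_congr rfl fun b _ => by ring
  -- term 3
  have ht3 : vVec (addT Γ T) s (Lup L ginv) r q
      = vVec Γ s (Lup L ginv) r q
        - (∑ a, ∑ b, q.2 a * T b a s q * pdv b (Lup L ginv r) q)
        + (∑ a, T r s a q * Lup L ginv a q) :=
    vVec_gauge Γ T (Lup L ginv) s r q
  have hY2X2 : (∑ a, T r s a q * Lup L ginv a q) = ∑ k, Lup L ginv k q * T r s k q :=
    Finset.sum_congr rfl fun a _ => by ring
  -- term 4
  have ht4 : (∑ j, ∑ k, vCov (addT Γ T) s L k q * ginv j k q * pdv j (Lup L ginv r) q)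
      = (∑ j, ∑ k, vCov Γ s L k q * ginv j k q * pdv j (Lup L ginv r) q)
        - (∑ a, ∑ b, q.2 a * T b a s q * pdv b (Lup L ginv r) q)
        - (∑ k, ∑ b, Av L ginv k r q * L b q * T b s k q) := by
    simp only [vCov_gauge, sub_mul, Finset.sum_sub_distrib]
    congr 1
    · congr 1
      -- W1 = Y1
      have step : (∑ j, ∑ k, (∑ a, ∑ b, q.2 a * T b a s q * pdv b (L k) q)
            * ginv j k q * pdv j (Lup L ginv r) q)
          = ∑ j, ∑ k, ∑ a, ∑ b, q.2 a * T b a s q * pdv b (L k) q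
            * ginv j k q * pdv j (Lup L ginv r) q := by
        simp only [Finset.sum_mul]
      rw [step,
        sum4_swap (fun j k a b => q.2 a * T b a s q * pdv b (L k) q
          * ginv j k q * pdv j (Lup L ginv r) q)]
      refine Finset.sum_congr rfl fun a _ => Finset.sum_congr rfl fun b _ => ?_
      -- ∑ j ∑ k ... = q.2 a * T b a s * pdv b (Lup r)
      have hjk : ∀ j : Fin n, (∑ k, q.2 a * T b a s q * pdv b (L k) q
            * ginv j k q * pdv j (Lup L ginv r) q)
          = (q.2 a * T b a s q * pdv j (Lup L ginv r) q) * kron j b := by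
        intro j
        rw [← hginv q j b, Finset.mul_sum]
        exact Finset.sum_congr rfl fun k _ => by simp only [gdn]; ring
      calc (∑ j, ∑ k, q.2 a * T b a s q * pdv b (L k) q
            * ginv j k q * pdv j (Lup L ginv r) q)
          = ∑ j, (q.2 a * T b a s q * pdv j (Lup L ginv r) q) * kron j b :=
            Finset.sum_congr rfl fun j _ => hjk j
        _ = q.2 a * T b a s q * pdv b (Lup L ginv r) q := sum_mul_kron b _
    · -- W2 = X4
      have step : (∑ j, ∑ k, (∑ b, T b s k q * L b q) * ginv j k q * pdv j (Lup L ginv r) q)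
          = ∑ j, ∑ k, ∑ b, T b s k q * L b q * ginv j k q * pdv j (Lup L ginv r) q := by
        simp only [Finset.sum_mul]
      rw [step,
        sum3_rotL (fun j k b => T b s k q * L b q * ginv j k q * pdv j (Lup L ginv r) q)]
      refine Finset.sum_congr rfl fun k _ => Finset.sum_congr rfl fun b _ => ?_
      simp only [Av]
      rw [Finset.sum_mul, Finset.sum_mul]
      exact Finset.sum_congr rfl fun j _ => by ring
  -- term 5
  have ht5 : (∑ j, ∑ m, (ginv j m q * pdv j (Lup L ginv r) q
          - ginv j r q * pdv j (Lup L ginv m) q)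
          * Uv L ginv (addT Γ T) Φ s q * L m q / L2 L ginv q)
      = (∑ j, ∑ m, (ginv j m q * pdv j (Lup L ginv r) q
          - ginv j r q * pdv j (Lup L ginv m) q)
          * Uv L ginv Γ Φ s q * L m q / L2 L ginv q)
        + (∑ m, (Av L ginv m r q - Av L ginv r m q)
            * (∑ k, ∑ b, Lup L ginv k q * L b q * T b s k q) * L m q / L2 L ginv q) := by
    simp only [Uv_gauge hginv, mul_add, add_mul, add_div, Finset.sum_add_distrib]
    congr 1
    rw [Finset.sum_comm]
    refine Finset.sum_congr rfl fun m _ => ?_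
    rw [show Av L ginv m r q - Av L ginv r m q
        = ∑ j, (ginv j m q * pdv j (Lup L ginv r) q - ginv j r q * pdv j (Lup L ginv m) q)
      from by simp only [Av]; rw [Finset.sum_sub_distrib],
      Finset.sum_mul, Finset.sum_mul, Finset.sum_div]
  -- the key algebraic identity
  have hE1X : (∑ k, ∑ b, Av L ginv r k q * L b q * T b s k q)
        - (∑ k, ∑ b, Av L ginv k r q * L b q * T b s k q)
      = ∑ m, ∑ j, L m q * T m s j q * (Av L ginv r j q - Av L ginv j r q) := by
    rw [← Finset.sum_sub_distrib]
    simp only [← Finset.sum_sub_distrib]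
    rw [Finset.sum_comm]
    exact Finset.sum_congr rfl fun b _ => Finset.sum_congr rfl fun k _ => by ring
  have hE2Z : ∀ k : Fin n, (∑ m, ∑ j, L m q * T m s j q * Lup L ginv j q * L k q
        * (Av L ginv r k q - Av L ginv k r q) / L2 L ginv q)
      = (Av L ginv r k q - Av L ginv k r q)
        * (∑ k', ∑ b, Lup L ginv k' q * L b q * T b s k' q) * L k q / L2 L ginv q := by
    intro k
    rw [Finset.mul_sum, Finset.sum_mul, Finset.sum_div, Finset.sum_comm]
    refine Finset.sum_congr rfl fun m _ => ?_
    rw [Finset.mul_sum, Finset.sum_mul, Finset.sum_div]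
    exact Finset.sum_congr rfl fun j _ => by ring
  have hE : (∑ m, ∑ j, ∑ k, L m q * T m s j q * Pv L ginv j k q
        * (Av L ginv r k q - Av L ginv k r q))
      = (∑ m, ∑ j, L m q * T m s j q * (Av L ginv r j q - Av L ginv j r q))
        - (∑ m, ∑ j, ∑ k, L m q * T m s j q * Lup L ginv j q * L k q
            * (Av L ginv r k q - Av L ginv k r q) / L2 L ginv q) := by
    simp only [Pv]
    have hsplit : ∀ m j k : Fin n, L m q * T m s j q
          * (kron j k - Lup L ginv j q * L k q / L2 L ginv q)
          * (Av L ginv r k q - Av L ginv k r q)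
        = kron j k * (L m q * T m s j q * (Av L ginv r k q - Av L ginv k r q))
          - L m q * T m s j q * Lup L ginv j q * L k q
            * (Av L ginv r k q - Av L ginv k r q) / L2 L ginv q := by
      intro m j k; ring
    simp only [hsplit, Finset.sum_sub_distrib]
    congr 1
    refine Finset.sum_congr rfl fun m _ => Finset.sum_congr rfl fun j _ => ?_
    exact sum_kron_left j _
  have hZ2 : (∑ m, ∑ j, ∑ k, L m q * T m s j q * Lup L ginv j q * L k q
        * (Av L ginv r k q - Av L ginv k r q) / L2 L ginv q)
      = ∑ k, (Av L ginv r k q - Av L ginv k r q)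
          * (∑ k', ∑ b, Lup L ginv k' q * L b q * T b s k' q) * L k q / L2 L ginv q := by
    rw [sum3_rotR (fun m j k => L m q * T m s j q * Lup L ginv j q * L k q
      * (Av L ginv r k q - Av L ginv k r q) / L2 L ginv q)]
    exact Finset.sum_congr rfl fun k _ => hE2Z k
  have hZZ : (∑ m, (Av L ginv m r q - Av L ginv r m q)
        * (∑ k, ∑ b, Lup L ginv k q * L b q * T b s k q) * L m q / L2 L ginv q)
      + (∑ k, (Av L ginv r k q - Av L ginv k r q)
          * (∑ k', ∑ b, Lup L ginv k' q * L b q * T b s k' q) * L k q / L2 L ginv q)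
      = 0 := by
    rw [← Finset.sum_add_distrib]
    exact Finset.sum_eq_zero fun m _ => by ring
  unfold Bv
  rw [ht1, ht2, ht3, ht4, ht5]
  linear_combination -hY2X2 + hE1X - hE + hZ2 + hZZ
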